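/- H¹_r(X) coincides with the space of restrictions to X of odd functions in H¹(N): an integrable function f on X belongs to H¹_r(X) if and only if there exists F ∈ H¹(N) with F(−t,x) = −F(t,x) for ν-almost every (t,x) ∈ N and F|_X = f. -/

import Mathlib

open MeasureTheory Metric Filter Set

noncomputable section

/-- The parabolic quasi-distance on `ℝ × E`. -/
def pdist {E : Type*} [MetricSpace E] (p q : ℝ × E) : ℝ :=
  max (Real.sqrt |p.1 - q.1|) (dist p.2 q.2)

/-- The open parabolic ball in `N = ℝ × E`. -/
def pball {E : Type*} [MetricSpace E] (c : ℝ × E) (r : ℝ) : Set (ℝ × E) :=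
  {p | pdist p c < r}

/-- The upper half space `X = (0,∞) × E` of `N = ℝ × E`. -/
def Xset (E : Type*) : Set (ℝ × E) := {p | 0 < p.1}

/-- The product measure `ν = Lebesgue ⊗ μ` on `N = ℝ × E`. -/
def pmeas {E : Type*} [MeasurableSpace E] (μ : Measure E) : Measure (ℝ × E) :=
  (volume : Measure ℝ).prod μ

/-- A `(1,2)`-atom on `N`: supported in a parabolic ball `Q`, mean value zero, and
`‖a‖_{L²(ν)} ≤ ν(Q)^{-1/2}`. -/
def IsAtom12 {E : Type*} [MetricSpace E] [MeasurableSpace E]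
    (μ : Measure E) (a : ℝ × E → ℝ) : Prop :=
  ∃ (c : ℝ × E) (r : ℝ), 0 < r ∧ Function.support a ⊆ pball c r ∧
    Integrable a (pmeas μ) ∧ (∫ p, a p ∂(pmeas μ)) = 0 ∧
    eLpNorm a 2 (pmeas μ) ≤ (pmeas μ (pball c r)) ^ (-(1:ℝ)/2)

/-- `f = Σ λ_i a_i` with convergence in `L¹(ρ)`. -/
def HasL1Decomp {E : Type*} [MeasurableSpace E] (ρ : Measure (ℝ × E))
    (f : ℝ × E → ℝ) (lam : ℕ → ℝ) (a : ℕ → ℝ × E → ℝ) : Prop :=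
  Summable (fun i => |lam i|) ∧
  Tendsto (fun k => eLpNorm (fun p => f p - ∑ i ∈ Finset.range k, lam i * a i p) 1 ρ)
    atTop (nhds 0)

/-- Membership in the atomic Hardy space `H¹(N)`. -/
def MemH1 {E : Type*} [MetricSpace E] [MeasurableSpace E]
    (μ : Measure E) (f : ℝ × E → ℝ) : Prop :=
  Integrable f (pmeas μ) ∧
  ∃ (lam : ℕ → ℝ) (a : ℕ → ℝ × E → ℝ), (∀ i, IsAtom12 μ (a i)) ∧
    HasL1Decomp (pmeas μ) f lam a

/-- The `H¹(N)` norm: infimum of `Σ |λ_i|` over all atomic decompositions. -/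
def H1norm {E : Type*} [MetricSpace E] [MeasurableSpace E]
    (μ : Measure E) (f : ℝ × E → ℝ) : ℝ :=
  sInf {c | ∃ (lam : ℕ → ℝ) (a : ℕ → ℝ × E → ℝ), (∀ i, IsAtom12 μ (a i)) ∧
    HasL1Decomp (pmeas μ) f lam a ∧ c = ∑' i, |lam i|}

/-- Membership in `H¹_r(X)`: `f ∈ L¹(X,ν)` is the restriction to `X` of some `F ∈ H¹(N)`. -/
def MemH1r {E : Type*} [MetricSpace E] [MeasurableSpace E]
    (μ : Measure E) (f : ℝ × E → ℝ) : Prop :=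
  IntegrableOn f (Xset E) (pmeas μ) ∧
  ∃ F : ℝ × E → ℝ, MemH1 μ F ∧ F =ᵐ[(pmeas μ).restrict (Xset E)] f

/-- The quotient norm on `H¹_r(X)`. -/
def H1rnorm {E : Type*} [MetricSpace E] [MeasurableSpace E]
    (μ : Measure E) (f : ℝ × E → ℝ) : ℝ :=
  sInf {c | ∃ F : ℝ × E → ℝ, MemH1 μ F ∧ F =ᵐ[(pmeas μ).restrict (Xset E)] f ∧
    c = H1norm μ F}

/-- Membership in `H¹_z(X)`: the extension of `f` by zero belongs to `H¹(N)`. -/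
def MemH1z {E : Type*} [MetricSpace E] [MeasurableSpace E]
    (μ : Measure E) (f : ℝ × E → ℝ) : Prop :=
  IntegrableOn f (Xset E) (pmeas μ) ∧ MemH1 μ ((Xset E).indicator f)

/-- The `H¹_z(X)` norm: the `H¹(N)` norm of the zero extension. -/
def H1znorm {E : Type*} [MetricSpace E] [MeasurableSpace E]
    (μ : Measure E) (f : ℝ × E → ℝ) : ℝ :=
  H1norm μ ((Xset E).indicator f)

set_option linter.unusedSectionVars false

namespace Stmt3Aux

variable {E : Type*} [MetricSpace E] [MeasurableSpace E] [BorelSpace E] {μ : Measure E}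

/-- The reflection `(t,x) ↦ (-t,x)`. -/
def rfl2 {E : Type*} (p : ℝ × E) : ℝ × E := (-p.1, p.2)

lemma rfl2_rfl2 (p : ℝ × E) : rfl2 (rfl2 p) = p := by simp [rfl2]

/-- The reflection as a measurable equivalence. -/
def rfl2Equiv (E : Type*) [MeasurableSpace E] : (ℝ × E) ≃ᵐ (ℝ × E) :=
  (MeasurableEquiv.neg ℝ).prodCongr (MeasurableEquiv.refl E)

lemma rfl2Equiv_coe : ⇑(rfl2Equiv E) = (rfl2 : ℝ × E → ℝ × E) := by
  funext p; rfl

lemma rfl2_emb : MeasurableEmbedding (rfl2 : ℝ × E → ℝ × E) := by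
  rw [← rfl2Equiv_coe]; exact (rfl2Equiv E).measurableEmbedding

lemma sigmaFinite_of
    (hvol : ∀ (x : E) (r : ℝ), 0 < r → 0 < μ (ball x r) ∧ μ (ball x r) < ⊤)
    (x₀ : E) : SigmaFinite μ := by
  refine ⟨⟨⟨fun n => ball x₀ (n + 1), fun _ => mem_univ _,
    fun n => (hvol x₀ (n + 1) (by positivity)).2, ?_⟩⟩⟩
  ext y
  simp only [mem_iUnion, mem_ball, mem_univ, iff_true]
  obtain ⟨n, hn⟩ := exists_nat_gt (dist y x₀)
  exact ⟨n, hn.trans_le (by linarith)⟩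

lemma rfl2_mp [SigmaFinite μ] : MeasurePreserving (rfl2 : ℝ × E → ℝ × E) (pmeas μ) (pmeas μ) := by
  have h := (Measure.measurePreserving_neg (volume : Measure ℝ)).prod (MeasurePreserving.id μ)
  have he : (Prod.map (Neg.neg : ℝ → ℝ) (id : E → E)) = (rfl2 : ℝ × E → ℝ × E) := by
    funext p; rfl
  rw [he] at h
  exact h

lemma measurableSet_Xset : MeasurableSet (Xset E) :=
  measurableSet_lt measurable_const measurable_fst

lemma isOpen_pball (c : ℝ × E) (r : ℝ) : IsOpen (pball c r) := by
  have : Continuous fun p : ℝ × E => pdist p c := by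
    apply Continuous.max
    · exact Real.continuous_sqrt.comp ((continuous_fst.sub continuous_const).abs)
    · exact continuous_snd.dist continuous_const
  exact isOpen_lt this continuous_const

lemma pball_eq (t₀ : ℝ) (x₀ : E) {r : ℝ} (hr : 0 < r) :
    pball ((t₀, x₀) : ℝ × E) r = Ioo (t₀ - r ^ 2) (t₀ + r ^ 2) ×ˢ ball x₀ r := by
  ext ⟨t, x⟩
  simp only [pball, pdist, mem_setOf_eq, max_lt_iff, mem_prod, mem_Ioo, mem_ball,
    Real.sqrt_lt' hr, abs_lt]
  constructor
  · rintro ⟨⟨h1, h2⟩, h3⟩; exact ⟨⟨by linarith, by linarith⟩, h3⟩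
  · rintro ⟨⟨h1, h2⟩, h3⟩; exact ⟨⟨by linarith, by linarith⟩, h3⟩

lemma pmeas_pball [SigmaFinite μ] (t₀ : ℝ) (x₀ : E) {r : ℝ} (hr : 0 < r) :
    pmeas μ (pball ((t₀, x₀) : ℝ × E) r) = ENNReal.ofReal (2 * r ^ 2) * μ (ball x₀ r) := by
  rw [pball_eq t₀ x₀ hr, pmeas, Measure.prod_prod, Real.volume_Ioo,
    show t₀ + r ^ 2 - (t₀ - r ^ 2) = 2 * r ^ 2 by ring]

lemma pmeas_pball_pos [SigmaFinite μ]
    (hvol : ∀ (x : E) (r : ℝ), 0 < r → 0 < μ (ball x r) ∧ μ (ball x r) < ⊤)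
    (t₀ : ℝ) (x₀ : E) {r : ℝ} (hr : 0 < r) :
    pmeas μ (pball ((t₀, x₀) : ℝ × E) r) ≠ 0 := by
  rw [pmeas_pball t₀ x₀ hr]
  exact mul_ne_zero (by simp [ENNReal.ofReal_eq_zero]; positivity) (hvol x₀ r hr).1.ne'

lemma pmeas_pball_ne_top [SigmaFinite μ]
    (hvol : ∀ (x : E) (r : ℝ), 0 < r → 0 < μ (ball x r) ∧ μ (ball x r) < ⊤)
    (t₀ : ℝ) (x₀ : E) {r : ℝ} (hr : 0 < r) :
    pmeas μ (pball ((t₀, x₀) : ℝ × E) r) ≠ ⊤ := by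
  rw [pmeas_pball t₀ x₀ hr]
  exact ENNReal.mul_ne_top ENNReal.ofReal_ne_top (hvol x₀ r hr).2.ne

lemma pmeas_doubling [SigmaFinite μ] {C_D : ℝ}
    (hdoub : ∀ (x : E) (r : ℝ), 0 < r →
      μ (ball x (2 * r)) ≤ ENNReal.ofReal C_D * μ (ball x r))
    (t₀ : ℝ) (x₀ : E) {r : ℝ} (hr : 0 < r) :
    pmeas μ (pball ((t₀, x₀) : ℝ × E) (2 * r)) ≤
      ENNReal.ofReal (4 * C_D) * pmeas μ (pball ((t₀, x₀) : ℝ × E) r) := by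
  rw [pmeas_pball t₀ x₀ (by positivity), pmeas_pball t₀ x₀ hr]
  rw [show (2 * (2 * r) ^ 2 : ℝ) = 4 * (2 * r ^ 2) by ring,
    ENNReal.ofReal_mul (by norm_num : (0:ℝ) ≤ 4), ENNReal.ofReal_mul (by norm_num : (0:ℝ) ≤ 4)]
  calc ENNReal.ofReal 4 * ENNReal.ofReal (2 * r ^ 2) * μ (ball x₀ (2 * r))
      ≤ ENNReal.ofReal 4 * ENNReal.ofReal (2 * r ^ 2) * (ENNReal.ofReal C_D * μ (ball x₀ r)) := by
        gcongr
        exact hdoub x₀ r hr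
    _ = ENNReal.ofReal 4 * ENNReal.ofReal C_D * (ENNReal.ofReal (2 * r ^ 2) * μ (ball x₀ r)) := by
        ring

end Stmt3Aux

open scoped ENNReal

namespace Stmt3Aux

variable {E : Type*} [MetricSpace E] [MeasurableSpace E] [BorelSpace E] {μ : Measure E}

lemma integrable_comp_rfl2 [SigmaFinite μ] {g : ℝ × E → ℝ} :
    Integrable (fun p => g (rfl2 p)) (pmeas μ) ↔ Integrable g (pmeas μ) :=
  rfl2_mp.integrable_comp_emb rfl2_emb

lemma integral_comp_rfl2 [SigmaFinite μ] (g : ℝ × E → ℝ) :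
    ∫ p, g (rfl2 p) ∂(pmeas μ) = ∫ p, g p ∂(pmeas μ) :=
  rfl2_mp.integral_comp rfl2_emb g

lemma eLpNorm_comp_rfl2 [SigmaFinite μ] {g : ℝ × E → ℝ} {q : ℝ≥0∞}
    (hg : AEStronglyMeasurable g (pmeas μ)) :
    eLpNorm (fun p => g (rfl2 p)) q (pmeas μ) = eLpNorm g q (pmeas μ) :=
  eLpNorm_comp_measurePreserving hg rfl2_mp

lemma aesm_comp_rfl2 [SigmaFinite μ] {g : ℝ × E → ℝ}
    (hg : AEStronglyMeasurable g (pmeas μ)) :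
    AEStronglyMeasurable (fun p => g (rfl2 p)) (pmeas μ) :=
  hg.comp_quasiMeasurePreserving rfl2_mp.quasiMeasurePreserving

lemma atom_L1
    (hvol : ∀ (x : E) (r : ℝ), 0 < r → 0 < μ (ball x r) ∧ μ (ball x r) < ⊤)
    {a : ℝ × E → ℝ} (ha : IsAtom12 μ a) :
    eLpNorm a 1 (pmeas μ) ≤ 1 := by
  obtain ⟨c, r, hr, hsupp, hint, -, hL2⟩ := ha
  haveI : SigmaFinite μ := sigmaFinite_of hvol c.2
  have hQm : MeasurableSet (pball c r) := (isOpen_pball c r).measurableSet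
  have hQ0 : pmeas μ (pball c r) ≠ 0 := pmeas_pball_pos hvol c.1 c.2 hr
  have hQt : pmeas μ (pball c r) ≠ ⊤ := pmeas_pball_ne_top hvol c.1 c.2 hr
  have h1 : eLpNorm a 1 (pmeas μ) = eLpNorm a 1 ((pmeas μ).restrict (pball c r)) := by
    conv_lhs => rw [← Set.indicator_eq_self.mpr hsupp]
    rw [eLpNorm_indicator_eq_eLpNorm_restrict hQm]
  have h2 := eLpNorm_le_eLpNorm_mul_rpow_measure_univ (p := 1) (q := 2)
      (by norm_num) (hint.aestronglyMeasurable.restrict (s := pball c r))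
  rw [Measure.restrict_apply_univ] at h2
  have h3 : eLpNorm a 2 ((pmeas μ).restrict (pball c r)) ≤ (pmeas μ (pball c r)) ^ (-(1:ℝ)/2) :=
    (eLpNorm_mono_measure a Measure.restrict_le_self).trans hL2
  rw [h1]
  refine h2.trans ?_
  have hexp : (1 / (1:ℝ≥0∞).toReal - 1 / (2:ℝ≥0∞).toReal) = (1:ℝ)/2 := by norm_num
  rw [hexp]
  calc eLpNorm a 2 ((pmeas μ).restrict (pball c r)) * pmeas μ (pball c r) ^ ((1:ℝ)/2)
      ≤ (pmeas μ (pball c r)) ^ (-(1:ℝ)/2) * pmeas μ (pball c r) ^ ((1:ℝ)/2) := by gcongr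
    _ = 1 := by
        rw [← ENNReal.rpow_add _ _ hQ0 hQt, show (-(1:ℝ)/2 + 1/2) = 0 by norm_num,
          ENNReal.rpow_zero]

lemma rpow_half_le {A B K : ℝ≥0∞} (hA0 : A ≠ 0) (hAt : A ≠ ⊤)
    (hB0 : B ≠ 0) (hBt : B ≠ ⊤) (hBK : B ≤ K * A) :
    A ^ (-(1:ℝ)/2) ≤ K ^ ((1:ℝ)/2) * B ^ (-(1:ℝ)/2) := by
  have hA1 : A ^ (-(1:ℝ)/2) * A ^ ((1:ℝ)/2) = 1 := by
    rw [← ENNReal.rpow_add _ _ hA0 hAt, show (-(1:ℝ)/2 + 1/2) = 0 by norm_num, ENNReal.rpow_zero]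
  have hB1 : B ^ ((1:ℝ)/2) * B ^ (-(1:ℝ)/2) = 1 := by
    rw [← ENNReal.rpow_add _ _ hB0 hBt, show ((1:ℝ)/2 + -(1)/2) = 0 by norm_num, ENNReal.rpow_zero]
  calc A ^ (-(1:ℝ)/2) = A ^ (-(1:ℝ)/2) * (B ^ ((1:ℝ)/2) * B ^ (-(1:ℝ)/2)) := by
        rw [hB1, mul_one]
    _ ≤ A ^ (-(1:ℝ)/2) * ((K ^ ((1:ℝ)/2) * A ^ ((1:ℝ)/2)) * B ^ (-(1:ℝ)/2)) := by
        gcongr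
        rw [← ENNReal.mul_rpow_of_nonneg _ _ (by norm_num : (0:ℝ) ≤ 1/2)]
        exact ENNReal.rpow_le_rpow hBK (by norm_num)
    _ = (A ^ (-(1:ℝ)/2) * A ^ ((1:ℝ)/2)) * (K ^ ((1:ℝ)/2) * B ^ (-(1:ℝ)/2)) := by ring
    _ = K ^ ((1:ℝ)/2) * B ^ (-(1:ℝ)/2) := by rw [hA1, one_mul]

lemma atom_decomp {C_D : ℝ} (hCD : 1 ≤ C_D)
    (hvol : ∀ (x : E) (r : ℝ), 0 < r → 0 < μ (ball x r) ∧ μ (ball x r) < ⊤)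
    (hdoub : ∀ (x : E) (r : ℝ), 0 < r →
      μ (ball x (2 * r)) ≤ ENNReal.ofReal C_D * μ (ball x r))
    {a : ℝ × E → ℝ} (ha : IsAtom12 μ a) :
    ∃ (m₁ m₂ : ℝ) (A₁ A₂ : ℝ × E → ℝ), IsAtom12 μ A₁ ∧ IsAtom12 μ A₂ ∧
      |m₁| ≤ 2 * Real.sqrt (4 * C_D) ∧ |m₂| ≤ 2 * Real.sqrt (4 * C_D) ∧
      ∀ p, (Xset E).indicator a p - (Xset E).indicator a (rfl2 p) = m₁ * A₁ p + m₂ * A₂ p := by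
  classical
  obtain ⟨⟨t₀, x₀⟩, r, hr, hsupp, hint, hzero, hL2⟩ := ha
  haveI : SigmaFinite μ := sigmaFinite_of hvol x₀
  have hr2 : (0:ℝ) < r ^ 2 := by positivity
  have hsq : (2:ℝ) ≤ Real.sqrt (4 * C_D) := by
    rw [show (2:ℝ) = Real.sqrt 4 by
      rw [show (4:ℝ) = 2 ^ 2 by norm_num, Real.sqrt_sq (by norm_num)]]
    exact Real.sqrt_le_sqrt (by linarith)
  have hC4 : (4:ℝ) ≤ 2 * Real.sqrt (4 * C_D) := by linarith
  have hCpos : (0:ℝ) < 2 * Real.sqrt (4 * C_D) := by linarith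
  have hmem : ∀ p : ℝ × E, a p ≠ 0 → |p.1 - t₀| < r ^ 2 ∧ dist p.2 x₀ < r := by
    intro p hp
    have h := hsupp (Function.mem_support.mpr hp)
    rw [pball_eq t₀ x₀ hr] at h
    refine ⟨abs_lt.mpr ⟨?_, ?_⟩, mem_ball.mp h.2⟩
    · have := h.1.1; linarith
    · have := h.1.2; linarith
  have zatom : IsAtom12 μ (fun _ : ℝ × E => (0:ℝ)) := by
    refine ⟨((t₀, x₀) : ℝ × E), r, hr, fun p hp => absurd rfl hp, integrable_zero _ _ _, by simp, ?_⟩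
    rw [show (fun _ : ℝ × E => (0:ℝ)) = (0 : ℝ × E → ℝ) from rfl, eLpNorm_zero]
    exact zero_le
  rcases le_or_gt (t₀ + r ^ 2) 0 with hcase | hcase1
  · -- the atom does not meet X
    have hz : ∀ p : ℝ × E, (Xset E).indicator a p = 0 := by
      intro p
      by_cases hpX : p ∈ Xset E
      · rw [Set.indicator_of_mem hpX]
        by_contra hap
        have h := (abs_lt.mp (hmem p hap).1).2
        have hx : (0:ℝ) < p.1 := hpX
        linarith
      · rw [Set.indicator_of_notMem hpX]
    exact ⟨0, 0, (fun _ => 0), (fun _ => 0), zatom, zatom,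
      by simpa using hCpos.le, by simpa using hCpos.le, fun p => by simp [hz]⟩
  rcases le_or_gt (r ^ 2) t₀ with hcase2 | hcase2
  · -- the atom is inside X; use the atom and its reflection
    have hXa : (Xset E).indicator a = a := by
      refine Set.indicator_eq_self.mpr ?_
      intro p hp
      have h := (abs_lt.mp (hmem p (Function.mem_support.mp hp)).1).1
      show (0:ℝ) < p.1
      linarith
    refine ⟨1, -1, a, (fun p => a (rfl2 p)),
      ⟨((t₀, x₀) : ℝ × E), r, hr, hsupp, hint, hzero, hL2⟩, ?_,
      by rw [abs_one]; linarith, by rw [abs_neg, abs_one]; linarith,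
      fun p => by rw [hXa]; ring⟩
    refine ⟨((-t₀, x₀) : ℝ × E), r, hr, ?_, integrable_comp_rfl2.mpr hint,
      by rw [integral_comp_rfl2]; exact hzero, ?_⟩
    · intro p hp
      have h := hmem _ (Function.mem_support.mp hp)
      rw [pball_eq (-t₀) x₀ hr]
      obtain ⟨h1, h2⟩ := abs_lt.mp h.1
      refine Set.mem_prod.mpr ⟨mem_Ioo.mpr ⟨?_, ?_⟩, mem_ball.mpr h.2⟩
      · show -t₀ - r ^ 2 < p.1
        have : -p.1 - t₀ < r ^ 2 := h2
        linarith
      · show p.1 < -t₀ + r ^ 2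
        have : -r ^ 2 < -p.1 - t₀ := h1
        linarith
    · rw [eLpNorm_comp_rfl2 hint.aestronglyMeasurable,
        show pmeas μ (pball ((-t₀, x₀) : ℝ × E) r) = pmeas μ (pball ((t₀, x₀) : ℝ × E) r) by
          rw [pmeas_pball _ _ hr, pmeas_pball _ _ hr]]
      exact hL2
  · -- the atom straddles the boundary
    have habs : |t₀| < r ^ 2 := abs_lt.mpr ⟨by linarith, hcase2⟩
    obtain ⟨habs1, habs2⟩ := abs_lt.mp habs
    set b : ℝ × E → ℝ :=
      fun p => (Xset E).indicator a p - (Xset E).indicator a (rfl2 p) with hbdef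
    have hIa : Integrable ((Xset E).indicator a) (pmeas μ) := hint.indicator measurableSet_Xset
    have hIar : Integrable (fun p => (Xset E).indicator a (rfl2 p)) (pmeas μ) :=
      integrable_comp_rfl2.mpr hIa
    have hIb : Integrable b (pmeas μ) := hIa.sub hIar
    have h2r : (0:ℝ) < 2 * r := by linarith
    have hbsupp : Function.support b ⊆ pball ((t₀, x₀) : ℝ × E) (2 * r) := by
      intro p hp
      rw [Function.mem_support] at hp
      have hp' : a p ≠ 0 ∨ a (rfl2 p) ≠ 0 := by
        by_contra hcon
        push_neg at hcon
        apply hp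
        show (Xset E).indicator a p - (Xset E).indicator a (rfl2 p) = 0
        rw [Set.indicator_apply, Set.indicator_apply]
        split_ifs <;> simp [hcon.1, hcon.2]
      rw [pball_eq t₀ x₀ h2r]
      have h4 : (2 * r) ^ 2 = 4 * r ^ 2 := by ring
      rcases hp' with h | h
      · have h := hmem p h
        obtain ⟨h1, h2⟩ := abs_lt.mp h.1
        refine Set.mem_prod.mpr ⟨mem_Ioo.mpr ⟨by nlinarith, by nlinarith⟩,
          mem_ball.mpr (by linarith [h.2])⟩
      · have h := hmem _ h
        obtain ⟨h1, h2⟩ := abs_lt.mp h.1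
        have h1' : -r ^ 2 < -p.1 - t₀ := h1
        have h2' : -p.1 - t₀ < r ^ 2 := h2
        have hdist : dist p.2 x₀ < r := h.2
        refine Set.mem_prod.mpr ⟨mem_Ioo.mpr ⟨by nlinarith, by nlinarith⟩,
          mem_ball.mpr (by linarith)⟩
    have hb0 : ∫ p, b p ∂(pmeas μ) = 0 := by
      have := integral_sub hIa hIar
      rw [hbdef]
      rw [show (fun p => (Xset E).indicator a p - (Xset E).indicator a (rfl2 p)) =
        (fun p => (Xset E).indicator a p) - (fun p => (Xset E).indicator a (rfl2 p)) from rfl] at this ⊢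
      rw [this, integral_comp_rfl2]
      ring
    -- measure notation
    set A := pmeas μ (pball ((t₀, x₀) : ℝ × E) r) with hAdef
    set B := pmeas μ (pball ((t₀, x₀) : ℝ × E) (2 * r)) with hBdef
    have hA0 : A ≠ 0 := pmeas_pball_pos hvol t₀ x₀ hr
    have hAt : A ≠ ⊤ := pmeas_pball_ne_top hvol t₀ x₀ hr
    have hB0 : B ≠ 0 := pmeas_pball_pos hvol t₀ x₀ h2r
    have hBt : B ≠ ⊤ := pmeas_pball_ne_top hvol t₀ x₀ h2r
    have hBK : B ≤ ENNReal.ofReal (4 * C_D) * A := by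
      rw [hAdef, hBdef]
      exact pmeas_doubling hdoub t₀ x₀ hr
    have hb2 : eLpNorm b 2 (pmeas μ) ≤ 2 * A ^ (-(1:ℝ)/2) := by
      have htri := eLpNorm_sub_le (p := 2) hIa.aestronglyMeasurable hIar.aestronglyMeasurable
        (by norm_num)
      refine htri.trans ?_
      rw [eLpNorm_comp_rfl2 hIa.aestronglyMeasurable]
      have hind : eLpNorm ((Xset E).indicator a) 2 (pmeas μ) ≤ A ^ (-(1:ℝ)/2) :=
        (eLpNorm_indicator_le a).trans hL2
      calc eLpNorm ((Xset E).indicator a) 2 (pmeas μ) + eLpNorm ((Xset E).indicator a) 2 (pmeas μ)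
          ≤ A ^ (-(1:ℝ)/2) + A ^ (-(1:ℝ)/2) := by gcongr
        _ = 2 * A ^ (-(1:ℝ)/2) := (two_mul _).symm
    have hkey : A ^ (-(1:ℝ)/2) ≤ (ENNReal.ofReal (4 * C_D)) ^ ((1:ℝ)/2) * B ^ (-(1:ℝ)/2) :=
      rpow_half_le hA0 hAt hB0 hBt hBK
    have hKhalf : (ENNReal.ofReal (4 * C_D)) ^ ((1:ℝ)/2) = ENNReal.ofReal (Real.sqrt (4 * C_D)) := by
      rw [ENNReal.ofReal_rpow_of_pos (by linarith : (0:ℝ) < 4 * C_D), ← Real.sqrt_eq_rpow]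
    have hsne : Real.sqrt (4 * C_D) ≠ 0 := by
      have : (0:ℝ) < Real.sqrt (4 * C_D) := by linarith
      exact this.ne'
    refine ⟨2 * Real.sqrt (4 * C_D), 0,
      (fun p => (2 * Real.sqrt (4 * C_D))⁻¹ * b p), (fun _ => 0), ?_, zatom,
      by rw [abs_of_pos hCpos], by simpa using hCpos.le, fun p => ?_⟩
    · refine ⟨((t₀, x₀) : ℝ × E), 2 * r, h2r, ?_, hIb.const_mul _, ?_, ?_⟩
      · intro p hp
        rw [Function.mem_support] at hp
        exact hbsupp (Function.mem_support.mpr (right_ne_zero_of_mul hp))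
      · rw [integral_const_mul, hb0, mul_zero]
      · have heq : (fun p => (2 * Real.sqrt (4 * C_D))⁻¹ * b p)
            = ((2 * Real.sqrt (4 * C_D))⁻¹ : ℝ) • b := rfl
        rw [heq, eLpNorm_const_smul, Real.enorm_eq_ofReal (by positivity)]
        calc ENNReal.ofReal (2 * Real.sqrt (4 * C_D))⁻¹ * eLpNorm b 2 (pmeas μ)
            ≤ ENNReal.ofReal (2 * Real.sqrt (4 * C_D))⁻¹ *
              (2 * ((ENNReal.ofReal (4 * C_D)) ^ ((1:ℝ)/2) * B ^ (-(1:ℝ)/2))) := by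
              exact mul_le_mul_right (hb2.trans (mul_le_mul_right hkey 2)) _
          _ = B ^ (-(1:ℝ)/2) := by
              rw [hKhalf, show (2:ℝ≥0∞) = ENNReal.ofReal 2 by simp, ← mul_assoc, ← mul_assoc,
                ← ENNReal.ofReal_mul (by positivity), ← ENNReal.ofReal_mul (by positivity),
                show (2 * Real.sqrt (4 * C_D))⁻¹ * 2 * Real.sqrt (4 * C_D) = 1 by
                  field_simp,
                ENNReal.ofReal_one, one_mul]
    · show (Xset E).indicator a p - (Xset E).indicator a (rfl2 p)
        = 2 * Real.sqrt (4 * C_D) * ((2 * Real.sqrt (4 * C_D))⁻¹ * b p) + 0 * 0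
      rw [← mul_assoc, mul_inv_cancel₀ hCpos.ne', one_mul, zero_mul, add_zero]

end Stmt3Aux

open Stmt3Aux in
/-- `H¹_r(X)` is the space of restrictions to `X` of odd functions in `H¹(N)`:
an integrable `f` on `X` belongs to `H¹_r(X)` iff there is `F ∈ H¹(N)` with
`F(−t,x) = −F(t,x)` for `ν`-a.e. `(t,x)` and `F|_X = f` (`ν`-a.e. on `X`). -/
theorem stmt3 {E : Type*} [MetricSpace E] [MeasurableSpace E] [BorelSpace E]
    (μ : Measure E) (C_D : ℝ) (hCD : 1 ≤ C_D)
    (hvol : ∀ (x : E) (r : ℝ), 0 < r → 0 < μ (ball x r) ∧ μ (ball x r) < ⊤)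
    (hdoub : ∀ (x : E) (r : ℝ), 0 < r →
      μ (ball x (2 * r)) ≤ ENNReal.ofReal C_D * μ (ball x r))
    (f : ℝ × E → ℝ) (hf : IntegrableOn f (Xset E) (pmeas μ)) :
    MemH1r μ f ↔
      ∃ F : ℝ × E → ℝ, MemH1 μ F ∧
        (∀ᵐ p ∂(pmeas μ), F (-p.1, p.2) = -F p) ∧
        F =ᵐ[(pmeas μ).restrict (Xset E)] f := by
  constructor
  · rintro ⟨-, F, hF, hFf⟩
    classical
    obtain ⟨hFint, lam, a, hatoms, hlsum, htend⟩ := hF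
    obtain ⟨c, -⟩ := hatoms 0
    haveI : SigmaFinite μ := sigmaFinite_of hvol c.2
    choose m₁ m₂ A₁ A₂ hA₁ hA₂ hm₁ hm₂ hpt using fun i => atom_decomp hCD hvol hdoub (hatoms i)
    set G : ℝ × E → ℝ :=
      fun p => (Xset E).indicator F p - (Xset E).indicator F (rfl2 p) with hGdef
    set lam' : ℕ → ℝ :=
      fun i => lam (i / 2) * (if i % 2 = 0 then m₁ (i / 2) else m₂ (i / 2)) with hlam'
    set a' : ℕ → ℝ × E → ℝ :=
      fun i => if i % 2 = 0 then A₁ (i / 2) else A₂ (i / 2) with ha'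
    have hIF : Integrable ((Xset E).indicator F) (pmeas μ) := hFint.indicator measurableSet_Xset
    have hIFr : Integrable (fun p => (Xset E).indicator F (rfl2 p)) (pmeas μ) :=
      integrable_comp_rfl2.mpr hIF
    have hGint : Integrable G (pmeas μ) := hIF.sub hIFr
    have hatoms' : ∀ i, IsAtom12 μ (a' i) := by
      intro i
      simp only [ha']
      split_ifs
      · exact hA₁ _
      · exact hA₂ _
    have hsum' : Summable (fun i => |lam' i|) := by
      have hb : ∀ i, |lam' i| ≤ 2 * Real.sqrt (4 * C_D) * |lam (i / 2)| := by
        intro i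
        simp only [hlam']
        rw [abs_mul]
        have hle : |if i % 2 = 0 then m₁ (i / 2) else m₂ (i / 2)| ≤ 2 * Real.sqrt (4 * C_D) := by
          split_ifs
          · exact hm₁ _
          · exact hm₂ _
        calc |lam (i / 2)| * |if i % 2 = 0 then m₁ (i / 2) else m₂ (i / 2)|
            ≤ |lam (i / 2)| * (2 * Real.sqrt (4 * C_D)) :=
              mul_le_mul_of_nonneg_left hle (abs_nonneg _)
          _ = 2 * Real.sqrt (4 * C_D) * |lam (i / 2)| := mul_comm _ _
      have h2 : Summable (fun i : ℕ => |lam (i / 2)|) := by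
        refine Summable.even_add_odd ?_ ?_
        · have he : ∀ k : ℕ, (2 * k) / 2 = k := fun k => by omega
          simp only [he]
          exact hlsum
        · have ho : ∀ k : ℕ, (2 * k + 1) / 2 = k := fun k => by omega
          simp only [ho]
          exact hlsum
      exact Summable.of_nonneg_of_le (fun i => abs_nonneg _) hb (h2.mul_left _)
    have hai : ∀ i, Integrable (a i) (pmeas μ) := by
      intro i
      obtain ⟨c, r, hr, hs, hi, -, -⟩ := hatoms i
      exact hi
    have hai' : ∀ i, Integrable (a' i) (pmeas μ) := by
      intro i
      obtain ⟨c, r, hr, hs, hi, -, -⟩ := hatoms' i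
      exact hi
    have hSint : ∀ k, Integrable (fun q => ∑ i ∈ Finset.range k, lam i * a i q) (pmeas μ) :=
      fun k => integrable_finset_sum _ (fun i _ => (hai i).const_mul _)
    have hS'int : ∀ k, Integrable (fun q => ∑ i ∈ Finset.range k, lam' i * a' i q) (pmeas μ) :=
      fun k => integrable_finset_sum _ (fun i _ => (hai' i).const_mul _)
    have hDint : ∀ k, Integrable
        (fun q => F q - ∑ i ∈ Finset.range k, lam i * a i q) (pmeas μ) :=
      fun k => hFint.sub (hSint k)
    have hS2 : ∀ (k : ℕ) (p : ℝ × E),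
        (∑ i ∈ Finset.range (2 * k), lam' i * a' i p)
          = ∑ i ∈ Finset.range k, lam i *
              ((Xset E).indicator (a i) p - (Xset E).indicator (a i) (rfl2 p)) := by
      intro k p
      induction k with
      | zero => simp
      | succ k ih =>
          rw [show 2 * (k + 1) = (2 * k + 1) + 1 by ring, Finset.sum_range_succ,
            Finset.sum_range_succ, ih, Finset.sum_range_succ]
          have h1 : (2 * k) % 2 = 0 := by omega
          have h2 : (2 * k) / 2 = k := by omega
          have h3 : ¬((2 * k + 1) % 2 = 0) := by omega
          have h4 : (2 * k + 1) / 2 = k := by omega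
          simp only [hlam', ha', h1, h2, h3, h4, if_true, if_false, if_pos, if_neg,
            not_false_iff]
          rw [hpt k p]
          ring
    have hswap : ∀ (k : ℕ) (p : ℝ × E),
        (∑ i ∈ Finset.range k, lam i *
            ((Xset E).indicator (a i) p - (Xset E).indicator (a i) (rfl2 p)))
          = (Xset E).indicator (fun q => ∑ i ∈ Finset.range k, lam i * a i q) p
            - (Xset E).indicator (fun q => ∑ i ∈ Finset.range k, lam i * a i q) (rfl2 p) := by
      intro k p
      simp only [Set.indicator_apply]
      split_ifs <;> simp [mul_sub, Finset.sum_sub_distrib]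
    have hkey : ∀ (k : ℕ),
        (fun p => G p - ∑ i ∈ Finset.range (2 * k), lam' i * a' i p)
          = fun p =>
              (Xset E).indicator (fun q => F q - ∑ i ∈ Finset.range k, lam i * a i q) p
            - (Xset E).indicator (fun q => F q - ∑ i ∈ Finset.range k, lam i * a i q)
                (rfl2 p) := by
      intro k
      funext p
      rw [hS2, hswap, hGdef]
      simp only [Set.indicator_apply]
      split_ifs <;> ring
    have hTbound : ∀ (g : ℝ × E → ℝ), Integrable g (pmeas μ) →
        eLpNorm (fun p => (Xset E).indicator g p - (Xset E).indicator g (rfl2 p)) 1 (pmeas μ)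
          ≤ 2 * eLpNorm g 1 (pmeas μ) := by
      intro g hg
      have h1 : Integrable ((Xset E).indicator g) (pmeas μ) := hg.indicator measurableSet_Xset
      have h2 : Integrable (fun p => (Xset E).indicator g (rfl2 p)) (pmeas μ) :=
        integrable_comp_rfl2.mpr h1
      have heq : (fun p => (Xset E).indicator g p - (Xset E).indicator g (rfl2 p))
          = ((Xset E).indicator g) - (fun p => (Xset E).indicator g (rfl2 p)) := rfl
      rw [heq]
      refine (eLpNorm_sub_le h1.aestronglyMeasurable h2.aestronglyMeasurable le_rfl).trans ?_
      rw [eLpNorm_comp_rfl2 h1.aestronglyMeasurable]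
      calc eLpNorm ((Xset E).indicator g) 1 (pmeas μ) + eLpNorm ((Xset E).indicator g) 1 (pmeas μ)
          ≤ eLpNorm g 1 (pmeas μ) + eLpNorm g 1 (pmeas μ) := by
            gcongr <;> exact eLpNorm_indicator_le g
        _ = 2 * eLpNorm g 1 (pmeas μ) := (two_mul _).symm
    have hatomL1 : ∀ i, eLpNorm (a' i) 1 (pmeas μ) ≤ 1 := fun i => atom_L1 hvol (hatoms' i)
    have hbnd : ∀ k : ℕ,
        eLpNorm (fun p => G p - ∑ i ∈ Finset.range k, lam' i * a' i p) 1 (pmeas μ)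
          ≤ 2 * eLpNorm
              (fun p => F p - ∑ i ∈ Finset.range (k / 2), lam i * a i p) 1 (pmeas μ)
            + ENNReal.ofReal |lam' (2 * (k / 2))| := by
      intro k
      have hke : k = 2 * (k / 2) ∨ k = 2 * (k / 2) + 1 := by omega
      set m := k / 2 with hm
      have hmain : eLpNorm (fun p => G p - ∑ i ∈ Finset.range (2 * m), lam' i * a' i p) 1 (pmeas μ)
          ≤ 2 * eLpNorm (fun p => F p - ∑ i ∈ Finset.range m, lam i * a i p) 1 (pmeas μ) := by
        rw [hkey m]
        exact hTbound _ (hDint m)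
      rcases hke with hke | hke
      · rw [hke]
        exact hmain.trans le_self_add
      · rw [hke]
        have hsplit : (fun p => G p - ∑ i ∈ Finset.range (2 * m + 1), lam' i * a' i p)
            = (fun p => G p - ∑ i ∈ Finset.range (2 * m), lam' i * a' i p)
              - (fun p => lam' (2 * m) * a' (2 * m) p) := by
          funext p
          simp only [Pi.sub_apply, Finset.sum_range_succ]
          ring
        rw [hsplit]
        have hA1 : AEStronglyMeasurable
            (fun p => G p - ∑ i ∈ Finset.range (2 * m), lam' i * a' i p) (pmeas μ) :=
          (hGint.sub (hS'int (2 * m))).aestronglyMeasurable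
        have hA2 : AEStronglyMeasurable (fun p => lam' (2 * m) * a' (2 * m) p) (pmeas μ) :=
          ((hai' (2 * m)).const_mul _).aestronglyMeasurable
        refine (eLpNorm_sub_le hA1 hA2 le_rfl).trans ?_
        have h2nd : eLpNorm (fun p => lam' (2 * m) * a' (2 * m) p) 1 (pmeas μ)
            ≤ ENNReal.ofReal |lam' (2 * m)| := by
          have heq : (fun p => lam' (2 * m) * a' (2 * m) p)
              = (lam' (2 * m) : ℝ) • (a' (2 * m)) := rfl
          rw [heq, eLpNorm_const_smul, Real.enorm_eq_ofReal_abs]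
          calc ENNReal.ofReal |lam' (2 * m)| * eLpNorm (a' (2 * m)) 1 (pmeas μ)
              ≤ ENNReal.ofReal |lam' (2 * m)| * 1 := mul_le_mul_right (hatomL1 _) _
            _ = ENNReal.ofReal |lam' (2 * m)| := mul_one _
        exact add_le_add hmain h2nd
    have hdiv : Tendsto (fun k : ℕ => k / 2) atTop atTop :=
      tendsto_atTop_atTop.mpr (fun b => ⟨2 * b, fun a ha => by omega⟩)
    have ht1 : Tendsto (fun k : ℕ => 2 * eLpNorm
        (fun p => F p - ∑ i ∈ Finset.range (k / 2), lam i * a i p) 1 (pmeas μ))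
        atTop (nhds 0) := by
      have hcomp := htend.comp hdiv
      have h2 := ENNReal.Tendsto.const_mul hcomp (Or.inr (by simp : (2:ℝ≥0∞) ≠ ⊤))
      simpa using h2
    have ht2 : Tendsto (fun k : ℕ => ENNReal.ofReal |lam' (2 * (k / 2))|) atTop (nhds 0) := by
      have h0 : Tendsto (fun i => |lam' i|) atTop (nhds 0) := hsum'.tendsto_atTop_zero
      have hcomp2 : Tendsto (fun k : ℕ => 2 * (k / 2)) atTop atTop :=
        tendsto_atTop_atTop.mpr (fun b => ⟨2 * b, fun a ha => by omega⟩)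
      have := (ENNReal.tendsto_ofReal (h0.comp hcomp2))
      simpa using this
    have htendG : Tendsto
        (fun k => eLpNorm (fun p => G p - ∑ i ∈ Finset.range k, lam' i * a' i p) 1 (pmeas μ))
        atTop (nhds 0) := by
      have hsum0 := ht1.add ht2
      rw [add_zero] at hsum0
      exact tendsto_of_tendsto_of_tendsto_of_le_of_le tendsto_const_nhds hsum0
        (fun k => zero_le) hbnd
    refine ⟨G, ⟨hGint, lam', a', hatoms', hsum', htendG⟩, ?_, ?_⟩
    · refine Eventually.of_forall fun p => ?_
      show G (-p.1, p.2) = -G p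
      rw [hGdef]
      show (Xset E).indicator F ((-p.1, p.2) : ℝ × E)
          - (Xset E).indicator F (rfl2 ((-p.1, p.2) : ℝ × E))
        = -((Xset E).indicator F p - (Xset E).indicator F (rfl2 p))
      have h1 : rfl2 ((-p.1, p.2) : ℝ × E) = p := by simp [rfl2]
      have h2 : ((-p.1, p.2) : ℝ × E) = rfl2 p := rfl
      rw [h1, h2]
      ring
    · have hGX : ∀ p ∈ Xset E, G p = F p := by
        intro p hp
        rw [hGdef]
        show (Xset E).indicator F p - (Xset E).indicator F (rfl2 p) = F p
        rw [Set.indicator_of_mem hp, Set.indicator_of_notMem, sub_zero]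
        show ¬(0:ℝ) < -p.1
        have : (0:ℝ) < p.1 := hp
        linarith
      have hGF : G =ᵐ[(pmeas μ).restrict (Xset E)] F :=
        (ae_restrict_iff' measurableSet_Xset).mpr (Eventually.of_forall hGX)
      exact Filter.EventuallyEq.trans hGF hFf
  · rintro ⟨F, hF, hodd, hFf⟩
    exact ⟨hf, F, hF, hFf⟩
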